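/- Let A, B, C, X, Y, Z be finite nonempty sets and let w be the tripartite function of cyclic form w(a,b,c) = (w_x(c), w_y(a), w_z(b)) with w_x : C → X, w_y : A → Y, w_z : B → Z. Then w is a tripartite process function if and only if at least one of the maps w_x, w_y, w_z is constant. -/

import Mathlib

/-- A tripartite process function (unique fixed-point property for three
parties, with outputs `A, B, C` and inputs `X, Y, Z`). -/
def IsPF3 {A B C X Y Z : Type} (w : A → B → C → X × Y × Z) : Prop :=
  ∀ (f : X → A) (g : Y → B) (h : Z → C),
    ∃! p : X × Y × Z, w (f p.1) (g p.2.1) (h p.2.2) = p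

/-- A tripartite function of cyclic (global-loop) form
`w(a,b,c) = (w_x(c), w_y(a), w_z(b))` is a tripartite process function iff at
least one of `w_x, w_y, w_z` is constant. -/
theorem cyclic_tripartite_processFunction_iff_some_constant
    (A B C X Y Z : Type)
    [Fintype A] [Nonempty A] [Fintype B] [Nonempty B] [Fintype C] [Nonempty C]
    [Fintype X] [Nonempty X] [Fintype Y] [Nonempty Y] [Fintype Z] [Nonempty Z]
    (wx : C → X) (wy : A → Y) (wz : B → Z) :
    IsPF3 (fun (a : A) (b : B) (c : C) => (wx c, wy a, wz b)) ↔
      ((∃ x0 : X, ∀ c, wx c = x0) ∨ (∃ y0 : Y, ∀ a, wy a = y0) ∨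
        (∃ z0 : Z, ∀ b, wz b = z0)) := by
  classical
  constructor
  · intro hpf
    by_contra hcon
    push_neg at hcon
    obtain ⟨hx, hy, hz⟩ := hcon
    set c1 : C := Classical.arbitrary C with hc1
    obtain ⟨c2, hc2⟩ := hx (wx c1)
    set a1 : A := Classical.arbitrary A with ha1
    obtain ⟨a2, ha2⟩ := hy (wy a1)
    set b1 : B := Classical.arbitrary B with hb1
    obtain ⟨b2, hb2⟩ := hz (wz b1)
    -- two distinct fixed points
    set x1 := wx c1
    set x2 := wx c2
    set y1 := wy a1
    set y2 := wy a2
    set z1 := wz b1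
    set z2 := wz b2
    have hx12 : x2 ≠ x1 := hc2
    have hy12 : y2 ≠ y1 := ha2
    have hz12 : z2 ≠ z1 := hb2
    set f : X → A := fun x => if x = x1 then a1 else a2 with hf
    set g : Y → B := fun y => if y = y1 then b1 else b2 with hg
    set h : Z → C := fun z => if z = z1 then c1 else c2 with hh
    obtain ⟨p, hp, hu⟩ := hpf f g h
    have h1 : ((x1, y1, z1) : X × Y × Z) = p := by
      apply hu
      simp [f, g, h]
      exact ⟨rfl, rfl, rfl⟩
    have h2 : ((x2, y2, z2) : X × Y × Z) = p := by
      apply hu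
      simp [f, g, h, hx12, hy12, hz12]
      exact ⟨rfl, rfl, rfl⟩
    rw [← h2] at h1
    exact hx12 (congrArg Prod.fst h1).symm
  · rintro (⟨x0, hx0⟩ | ⟨y0, hy0⟩ | ⟨z0, hz0⟩) <;> intro f g h
    · refine ⟨(x0, wy (f x0), wz (g (wy (f x0)))), by simp [hx0], ?_⟩
      rintro ⟨x, y, z⟩ hq
      simp only [Prod.mk.injEq] at hq
      have hx : x = x0 := by rw [← hq.1]; exact hx0 _
      subst hx
      refine Prod.ext rfl (Prod.ext ?_ ?_) <;> simp_all
    · refine ⟨(wx (h (wz (g y0))), y0, wz (g y0)), by simp [hy0], ?_⟩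
      rintro ⟨x, y, z⟩ hq
      simp only [Prod.mk.injEq] at hq
      have hy : y = y0 := by rw [← hq.2.1]; exact hy0 _
      subst hy
      refine Prod.ext ?_ (Prod.ext rfl ?_) <;> simp_all
    · refine ⟨(wx (h z0), wy (f (wx (h z0))), z0), by simp [hz0], ?_⟩
      rintro ⟨x, y, z⟩ hq
      simp only [Prod.mk.injEq] at hq
      have hzz : z = z0 := by rw [← hq.2.2]; exact hz0 _
      subst hzz
      refine Prod.ext ?_ (Prod.ext ?_ rfl) <;> simp_all
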